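/- Under ν-strong convexity, δ-mean-square-Lipschitz gradients, learning rate μ < min{ν/((2α+7)δ²), 1/(mν)}, and snapshot period m > 16αδ²/ν², the α-SVRG iterates satisfy, at iterations i = k·m: E‖w° - w_i‖² ≤ ((1-μν)^m + 8μδ²α/ν)^k ‖w° - w_0‖² + 3μσ²(1-α)/(ν - 8μδ²α). -/

import Mathlib

open InnerProductSpace Set Finset
open scoped RealInnerProductSpace

section AlphaSVRGAux

variable {E : Type*} [NormedAddCommGroup E] [InnerProductSpace ℝ E] [CompleteSpace E]

lemma alphaSVRG_convex_grad_mono {g : E → ℝ} {g' : E → E}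
    (hg : ∀ z, HasGradientAt g (g' z) z) (hconv : ConvexOn ℝ Set.univ g)
    (x y : E) : (0:ℝ) ≤ ⟪g' x - g' y, x - y⟫_ℝ := by
  set L : ℝ → E := fun t => y + t • (x - y) with hL
  have hline : ∀ t : ℝ, HasDerivAt L (x - y) t := by
    intro t
    rw [hL]; simpa using ((hasDerivAt_id t).smul_const (x - y)).const_add y
  have hd : ∀ t : ℝ, HasDerivAt (fun s => g (L s)) (⟪g' (L t), x - y⟫_ℝ) t := by
    intro t
    have h1 := (hg (L t)).hasFDerivAt.comp_hasDerivAt t (hline t)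
    exact h1
  have hcφ : ConvexOn ℝ Set.univ (fun s => g (L s)) := by
    have := hconv.comp_affineMap (AffineMap.lineMap y x : ℝ →ᵃ[ℝ] E)
    have heq : (fun s => g (L s)) = g ∘ (AffineMap.lineMap y x : ℝ →ᵃ[ℝ] E) := by
      funext s
      simp only [hL, Function.comp_apply, AffineMap.lineMap_apply_module]
      congr 1
      module
    rw [heq]
    simpa using this
  have h0 : (⟪g' (L 0), x - y⟫_ℝ) ≤ slope (fun s => g (L s)) 0 1 :=
    hcφ.le_slope_of_hasDerivAt (mem_univ _) (mem_univ _) one_pos (hd 0)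
  have h1 : slope (fun s => g (L s)) 0 1 ≤ ⟪g' (L 1), x - y⟫_ℝ :=
    hcφ.slope_le_of_hasDerivAt (mem_univ _) (mem_univ _) one_pos (hd 1)
  have hL0 : L 0 = y := by simp [hL]
  have hL1 : L 1 = x := by simp [hL]
  have := h0.trans h1
  rw [hL0, hL1, inner_sub_left] at *
  linarith

lemma alphaSVRG_strong_grad_mono {J : E → ℝ} {gradJ : E → E} {ν : ℝ}
    (hJd : ∀ z, HasGradientAt J (gradJ z) z) (hsc : StrongConvexOn Set.univ ν J)
    (x y : E) : ν * ‖x - y‖^2 ≤ ⟪gradJ x - gradJ y, x - y⟫_ℝ := by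
  have hconv : ConvexOn ℝ Set.univ (fun z => J z - ν / 2 * ‖z‖^2) :=
    strongConvexOn_iff_convex.mp hsc
  have hg : ∀ z : E, HasGradientAt (fun z => J z - ν / 2 * ‖z‖^2) (gradJ z - ν • z) z := by
    intro z
    rw [hasGradientAt_iff_hasFDerivAt]
    have h2 : HasFDerivAt (fun z : E => ν / 2 * ‖z‖ ^ 2)
        ((ν / 2) • (2 • (innerSL ℝ z))) z :=
      ((hasFDerivAt_id z).norm_sq).const_mul (ν / 2)
    have h1 := (hJd z).hasFDerivAt.fun_sub h2
    refine h1.congr_fderiv ?_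
    ext v
    simp [inner_sub_left, real_inner_smul_left]
    ring
  have hmono := alphaSVRG_convex_grad_mono hg hconv x y
  have hid : ⟪(gradJ x - ν • x) - (gradJ y - ν • y), x - y⟫_ℝ
      = ⟪gradJ x - gradJ y, x - y⟫_ℝ - ν * ‖x - y‖^2 := by
    rw [show (gradJ x - ν • x) - (gradJ y - ν • y) = (gradJ x - gradJ y) - ν • (x - y) by
      rw [smul_sub]; abel]
    rw [inner_sub_left, real_inner_smul_left, real_inner_self_eq_norm_sq]
  rw [hid] at hmono
  linarith

set_option maxHeartbeats 1000000 in
lemma alphaSVRG_perstep {N : ℕ} (hN : 0 < N)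
    (gradQ : Fin N → E → E) (gradJ : E → E) (δn : Fin N → ℝ)
    (δ ν σ μ α : ℝ) (wo : E)
    (hgradJ : ∀ x, gradJ x = (N : ℝ)⁻¹ • ∑ n, gradQ n x)
    (hLipn : ∀ n x y, ‖gradQ n x - gradQ n y‖ ≤ δn n * ‖x - y‖)
    (hδ : δ ^ 2 = (N : ℝ)⁻¹ * ∑ n, δn n ^ 2)
    (hσ : σ ^ 2 = (N : ℝ)⁻¹ * ∑ n, ‖gradQ n wo‖ ^ 2)
    (hmono : ∀ x y, ν * ‖x - y‖ ^ 2 ≤ ⟪gradJ x - gradJ y, x - y⟫_ℝ)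
    (hJo : gradJ wo = 0)
    (hμ0 : 0 ≤ μ) (hα0 : 0 ≤ α) (hα1 : α ≤ 1) (h3 : 3 * (μ * δ ^ 2) ≤ ν)
    (x y : E) :
    (N : ℝ)⁻¹ * ∑ n, ‖wo - (x - μ • (gradQ n x - α • gradQ n y + α • gradJ y))‖ ^ 2
      ≤ (1 - μ * ν) * ‖wo - x‖ ^ 2 + 3 * μ ^ 2 * α ^ 2 * δ ^ 2 * ‖wo - y‖ ^ 2
        + 3 * μ ^ 2 * (1 - α) ^ 2 * σ ^ 2 := by
  have hNR : (0 : ℝ) < N := by exact_mod_cast hN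
  set c : ℝ := (N : ℝ)⁻¹ with hc
  have hc0 : 0 < c := by positivity
  have hcN : c * N = 1 := inv_mul_cancel₀ (ne_of_gt hNR)
  set G : Fin N → E := fun n => gradQ n x - α • gradQ n y + α • gradJ y with hG
  have hexp : ∀ n, ‖wo - (x - μ • G n)‖ ^ 2
      = ‖wo - x‖ ^ 2 + 2 * (μ * ⟪wo - x, G n⟫_ℝ) + μ ^ 2 * ‖G n‖ ^ 2 := by
    intro n
    have h1 : wo - (x - μ • G n) = (wo - x) + μ • G n := by abel
    rw [h1, norm_add_sq_real, real_inner_smul_right, norm_smul, mul_pow, Real.norm_eq_abs,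
      sq_abs]
  have hQo0 : ∑ n, gradQ n wo = 0 := by
    have h0 := hgradJ wo
    rw [hJo] at h0
    rcases (smul_eq_zero.mp h0.symm) with h | h
    · exact absurd h (by positivity)
    · exact h
  have hGsum : ∑ n, G n = (∑ n, gradQ n x) - α • (∑ n, gradQ n y) + (N : ℝ) • (α • gradJ y) := by
    rw [hG, Finset.sum_add_distrib, Finset.sum_sub_distrib, ← Finset.smul_sum,
      Finset.sum_const, Finset.card_univ, Fintype.card_fin, ← Nat.cast_smul_eq_nsmul ℝ]
  have hNne : (N : ℝ) ≠ 0 := ne_of_gt hNR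
  have hEG : c • ∑ n, G n = gradJ x := by
    rw [hGsum, hgradJ x, hgradJ y, hc]
    match_scalars <;> field_simp <;> ring
  have hip : ⟪wo - x, ∑ n, G n⟫_ℝ = (N : ℝ) * ⟪wo - x, gradJ x⟫_ℝ := by
    rw [← hEG, real_inner_smul_right, ← mul_assoc]
    rw [show (N : ℝ) * c = 1 by rw [mul_comm]; exact hcN, one_mul]
  have hip2 : ⟪wo - x, gradJ x⟫_ℝ ≤ -(ν * ‖wo - x‖ ^ 2) := by
    have h := hmono x wo
    rw [hJo, sub_zero] at h
    have h2 : ⟪gradJ x, x - wo⟫_ℝ = - ⟪wo - x, gradJ x⟫_ℝ := by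
      rw [show x - wo = -(wo - x) by abel, inner_neg_right, real_inner_comm]
    rw [h2, norm_sub_rev] at h
    linarith
  have hA : ∀ n, ‖gradQ n x - gradQ n wo‖ ^ 2 ≤ δn n ^ 2 * ‖wo - x‖ ^ 2 := by
    intro n
    have := hLipn n x wo
    rw [norm_sub_rev x wo] at this
    nlinarith [norm_nonneg (gradQ n x - gradQ n wo), norm_nonneg (wo - x)]
  have hB : ∀ n, ‖gradQ n y - gradQ n wo‖ ^ 2 ≤ δn n ^ 2 * ‖wo - y‖ ^ 2 := by
    intro n
    have := hLipn n y wo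
    rw [norm_sub_rev y wo] at this
    nlinarith [norm_nonneg (gradQ n y - gradQ n wo), norm_nonneg (wo - y)]
  have hGn : ∀ n, ‖G n‖ ^ 2 ≤ 3 * ‖gradQ n x - gradQ n wo‖ ^ 2
      + 3 * (α ^ 2 * ‖gradJ y - (gradQ n y - gradQ n wo)‖ ^ 2)
      + 3 * ((1 - α) ^ 2 * ‖gradQ n wo‖ ^ 2) := by
    intro n
    have hdec : G n = (gradQ n x - gradQ n wo) + α • (gradJ y - (gradQ n y - gradQ n wo))
        + (1 - α) • gradQ n wo := by
      rw [hG]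
      simp only [smul_sub, sub_smul, one_smul]
      abel
    have htri : ‖G n‖ ≤ ‖gradQ n x - gradQ n wo‖ + ‖α • (gradJ y - (gradQ n y - gradQ n wo))‖
        + ‖(1 - α) • gradQ n wo‖ := by
      rw [hdec]; exact norm_add₃_le
    have hsq : ‖G n‖ ^ 2 ≤ (‖gradQ n x - gradQ n wo‖ + ‖α • (gradJ y - (gradQ n y - gradQ n wo))‖
        + ‖(1 - α) • gradQ n wo‖) ^ 2 := by
      apply pow_le_pow_left₀ (norm_nonneg _) htri
    rw [norm_smul, norm_smul, Real.norm_eq_abs, Real.norm_eq_abs, abs_of_nonneg hα0,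
      abs_of_nonneg (by linarith : (0:ℝ) ≤ 1 - α)] at hsq
    nlinarith [sq_nonneg (‖gradQ n x - gradQ n wo‖ - α * ‖gradJ y - (gradQ n y - gradQ n wo)‖),
      sq_nonneg (‖gradQ n x - gradQ n wo‖ - (1 - α) * ‖gradQ n wo‖),
      sq_nonneg (α * ‖gradJ y - (gradQ n y - gradQ n wo)‖ - (1 - α) * ‖gradQ n wo‖)]
  have hBsum : ∑ n, (gradQ n y - gradQ n wo) = (N : ℝ) • gradJ y := by
    rw [Finset.sum_sub_distrib, hQo0, sub_zero, hgradJ y, smul_smul,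
      mul_inv_cancel₀ (ne_of_gt hNR), one_smul]
  have hvar : ∑ n, ‖gradJ y - (gradQ n y - gradQ n wo)‖ ^ 2
      ≤ ∑ n, ‖gradQ n y - gradQ n wo‖ ^ 2 := by
    have hexp2 : ∀ n, ‖gradJ y - (gradQ n y - gradQ n wo)‖ ^ 2
        = ‖gradJ y‖ ^ 2 - 2 * ⟪gradJ y, gradQ n y - gradQ n wo⟫_ℝ
          + ‖gradQ n y - gradQ n wo‖ ^ 2 := fun n => norm_sub_sq_real _ _
    have hkey : ∑ n, ‖gradJ y - (gradQ n y - gradQ n wo)‖ ^ 2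
        = (N : ℝ) * ‖gradJ y‖ ^ 2 - 2 * ((N : ℝ) * ‖gradJ y‖ ^ 2)
          + ∑ n, ‖gradQ n y - gradQ n wo‖ ^ 2 := by
      rw [Finset.sum_congr rfl fun n _ => hexp2 n, Finset.sum_add_distrib,
        Finset.sum_sub_distrib, Finset.sum_const, Finset.card_univ, Fintype.card_fin,
        nsmul_eq_mul, ← Finset.mul_sum, ← inner_sum, hBsum, real_inner_smul_right,
        real_inner_self_eq_norm_sq]
    rw [hkey]
    linarith [mul_nonneg hNR.le (sq_nonneg ‖gradJ y‖)]
  have hSG : c * ∑ n, ‖G n‖ ^ 2 ≤ 3 * δ ^ 2 * ‖wo - x‖ ^ 2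
      + 3 * α ^ 2 * δ ^ 2 * ‖wo - y‖ ^ 2 + 3 * (1 - α) ^ 2 * σ ^ 2 := by
    have h1 : ∑ n, ‖G n‖ ^ 2 ≤ 3 * ∑ n, ‖gradQ n x - gradQ n wo‖ ^ 2
        + 3 * α ^ 2 * ∑ n, ‖gradJ y - (gradQ n y - gradQ n wo)‖ ^ 2
        + 3 * (1 - α) ^ 2 * ∑ n, ‖gradQ n wo‖ ^ 2 := by
      rw [Finset.mul_sum, Finset.mul_sum, Finset.mul_sum, ← Finset.sum_add_distrib,
        ← Finset.sum_add_distrib]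
      refine Finset.sum_le_sum fun n _ => ?_
      linarith [hGn n]
    have h2 : ∑ n, ‖gradQ n x - gradQ n wo‖ ^ 2 ≤ (∑ n, δn n ^ 2) * ‖wo - x‖ ^ 2 := by
      rw [Finset.sum_mul]
      exact Finset.sum_le_sum fun n _ => hA n
    have h3' : ∑ n, ‖gradJ y - (gradQ n y - gradQ n wo)‖ ^ 2 ≤ (∑ n, δn n ^ 2) * ‖wo - y‖ ^ 2 := by
      refine hvar.trans ?_
      rw [Finset.sum_mul]
      exact Finset.sum_le_sum fun n _ => hB n
    have hδ2 : c * ∑ n, δn n ^ 2 = δ ^ 2 := hδ.symm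
    have hσ2 : c * ∑ n, ‖gradQ n wo‖ ^ 2 = σ ^ 2 := hσ.symm
    calc c * ∑ n, ‖G n‖ ^ 2
        ≤ c * (3 * ∑ n, ‖gradQ n x - gradQ n wo‖ ^ 2
          + 3 * α ^ 2 * ∑ n, ‖gradJ y - (gradQ n y - gradQ n wo)‖ ^ 2
          + 3 * (1 - α) ^ 2 * ∑ n, ‖gradQ n wo‖ ^ 2) := by
          exact mul_le_mul_of_nonneg_left h1 hc0.le
      _ ≤ c * (3 * ((∑ n, δn n ^ 2) * ‖wo - x‖ ^ 2)
          + 3 * α ^ 2 * ((∑ n, δn n ^ 2) * ‖wo - y‖ ^ 2)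
          + 3 * (1 - α) ^ 2 * ∑ n, ‖gradQ n wo‖ ^ 2) := by
          have ha := mul_le_mul_of_nonneg_left h3' (by positivity : (0:ℝ) ≤ 3 * α ^ 2)
          have hb := mul_le_mul_of_nonneg_left h2 (by norm_num : (0:ℝ) ≤ 3)
          have hcc : 3 * ∑ n, ‖gradQ n x - gradQ n wo‖ ^ 2
              + 3 * α ^ 2 * ∑ n, ‖gradJ y - (gradQ n y - gradQ n wo)‖ ^ 2
              + 3 * (1 - α) ^ 2 * ∑ n, ‖gradQ n wo‖ ^ 2
              ≤ 3 * ((∑ n, δn n ^ 2) * ‖wo - x‖ ^ 2)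
              + 3 * α ^ 2 * ((∑ n, δn n ^ 2) * ‖wo - y‖ ^ 2)
              + 3 * (1 - α) ^ 2 * ∑ n, ‖gradQ n wo‖ ^ 2 := by linarith
          exact mul_le_mul_of_nonneg_left hcc hc0.le
      _ = 3 * (c * ∑ n, δn n ^ 2) * ‖wo - x‖ ^ 2
          + 3 * α ^ 2 * (c * ∑ n, δn n ^ 2) * ‖wo - y‖ ^ 2
          + 3 * (1 - α) ^ 2 * (c * ∑ n, ‖gradQ n wo‖ ^ 2) := by ring
      _ = 3 * δ ^ 2 * ‖wo - x‖ ^ 2 + 3 * α ^ 2 * δ ^ 2 * ‖wo - y‖ ^ 2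
          + 3 * (1 - α) ^ 2 * σ ^ 2 := by rw [hδ2, hσ2]
  have htot : c * ∑ n, ‖wo - (x - μ • G n)‖ ^ 2
      = ‖wo - x‖ ^ 2 + 2 * μ * ⟪wo - x, gradJ x⟫_ℝ + μ ^ 2 * (c * ∑ n, ‖G n‖ ^ 2) := by
    rw [Finset.sum_congr rfl fun n _ => hexp n, Finset.sum_add_distrib, Finset.sum_add_distrib,
      Finset.sum_const, Finset.card_univ, Fintype.card_fin, nsmul_eq_mul]
    have : ∑ n, 2 * (μ * ⟪wo - x, G n⟫_ℝ) = 2 * μ * ⟪wo - x, ∑ n, G n⟫_ℝ := by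
      rw [inner_sum, Finset.mul_sum]
      refine Finset.sum_congr rfl fun n _ => by ring
    rw [this, hip, ← Finset.mul_sum, hc]
    field_simp
  show c * ∑ n, ‖wo - (x - μ • G n)‖ ^ 2 ≤ _
  rw [htot]
  have hE2 : (0:ℝ) ≤ ‖wo - x‖ ^ 2 := sq_nonneg _
  have h5 := mul_le_mul_of_nonneg_left hSG (sq_nonneg μ)
  have h6 := mul_le_mul_of_nonneg_left hip2 (by linarith : (0:ℝ) ≤ 2 * μ)
  have h7 : 3 * μ ^ 2 * δ ^ 2 * ‖wo - x‖ ^ 2 ≤ μ * ν * ‖wo - x‖ ^ 2 := by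
    have h8 := mul_nonneg (sub_nonneg.mpr h3) (mul_nonneg hμ0 hE2)
    nlinarith [h8]
  nlinarith [h5, h6, h7]

end AlphaSVRGAux

set_option maxHeartbeats 4000000

/-- Convergence of α-SVRG under strong convexity: with ν-strongly convex
`J = (1/N)Σ Q(·;xₙ)` (minimizer `w°`), `δₙ`-Lipschitz component gradients with
`δ² = (1/N)Σ δₙ²`, `σ² = (1/N)Σ ‖∇Q(w°;xₙ)‖²`, learning rate
`μ < min{ν/((2α+7)δ²), 1/(mν)}` and snapshot period `m > 16αδ²/ν²`, the
α-SVRG iterates (snapshot refreshed every `m` steps, i.i.d. uniform indices,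
expectation written as an average over all index tuples) satisfy at `i = k·m`:
`E‖w° - w_{km}‖² ≤ ((1-μν)^m + 8μδ²α/ν)^k ‖w° - w₀‖² + 3μσ²(1-α)/(ν - 8μδ²α)`. -/
theorem alpha_svrg_convergence
    {E : Type*} [NormedAddCommGroup E] [InnerProductSpace ℝ E] [CompleteSpace E]
    {N m : ℕ} (hN : 0 < N) (hm : 0 < m)
    (Q : Fin N → E → ℝ) (gradQ : Fin N → E → E) (J : E → ℝ) (gradJ : E → E)
    (δn : Fin N → ℝ) (δ ν σ μ α : ℝ) (wo w0 : E)
    (w : ℕ → (ℕ → Fin N) → E)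
    (hQ : ∀ n x, HasGradientAt (Q n) (gradQ n x) x)
    (hJ : ∀ x, J x = (N : ℝ)⁻¹ * ∑ n, Q n x)
    (hgradJ : ∀ x, gradJ x = (N : ℝ)⁻¹ • ∑ n, gradQ n x)
    (hLipn : ∀ n x y, ‖gradQ n x - gradQ n y‖ ≤ δn n * ‖x - y‖)
    (hδ : δ ^ 2 = (N : ℝ)⁻¹ * ∑ n, δn n ^ 2)
    (hσ : σ ^ 2 = (N : ℝ)⁻¹ * ∑ n, ‖gradQ n wo‖ ^ 2)
    (hsc : StrongConvexOn Set.univ ν J)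
    (hmin : IsMinOn J Set.univ wo)
    (hν : 0 < ν) (hδpos : 0 < δ) (hα0 : 0 ≤ α) (hα1 : α ≤ 1) (hμ0 : 0 < μ)
    (hμ : μ < min (ν / ((2 * α + 7) * δ ^ 2)) (1 / (m * ν)))
    (hm16 : (m : ℝ) > 16 * α * δ ^ 2 / ν ^ 2)
    (hw0 : ∀ ω, w 0 ω = w0)
    (hupd : ∀ i ω, w (i + 1) ω =
      w i ω - μ • (gradQ (ω i) (w i ω) - α • gradQ (ω i) (w (m * (i / m)) ω)
        + α • gradJ (w (m * (i / m)) ω)))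
    (k : ℕ) :
    ((N : ℝ) ^ (k * m))⁻¹ *
        ∑ ωf : Fin (k * m) → Fin N,
          ‖wo - w (k * m) (fun j => if h : j < k * m then ωf ⟨j, h⟩ else ⟨0, hN⟩)‖ ^ 2 ≤
      ((1 - μ * ν) ^ m + 8 * μ * δ ^ 2 * α / ν) ^ k * ‖wo - w0‖ ^ 2
        + 3 * μ * σ ^ 2 * (1 - α) / (ν - 8 * μ * δ ^ 2 * α) := by
  classical
  -- scalar facts
  have hNR : (0:ℝ) < N := by exact_mod_cast hN
  have hmR : (1:ℝ) ≤ m := by exact_mod_cast hm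
  have hδ2 : (0:ℝ) < δ ^ 2 := by positivity
  have hμa : μ < ν / ((2*α+7) * δ^2) := lt_of_lt_of_le hμ (min_le_left _ _)
  have hμb : μ < 1 / (m * ν) := lt_of_lt_of_le hμ (min_le_right _ _)
  have hX : (0:ℝ) < (2*α+7) * δ^2 := by positivity
  have hμX : μ * ((2*α+7) * δ^2) < ν := (lt_div_iff₀ hX).mp hμa
  have hμδα : (0:ℝ) ≤ μ * δ^2 * α := by positivity
  have hμδ : (0:ℝ) ≤ μ * δ^2 := by positivity
  have h3 : 3 * (μ * δ^2) ≤ ν := by nlinarith [hμδα, hμδ]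
  have h8 : 8 * μ * δ^2 * α < ν := by
    nlinarith [mul_nonneg hμδ (by linarith : (0:ℝ) ≤ 1 - α)]
  have hmν : (0:ℝ) < (m:ℝ) * ν := by positivity
  have htm : μ * ((m:ℝ) * ν) < 1 := (lt_div_iff₀ hmν).mp hμb
  have ht0 : (0:ℝ) < μ * ν := mul_pos hμ0 hν
  have ht1 : μ * ν < 1 := by
    nlinarith [mul_nonneg ht0.le (by linarith : (0:ℝ) ≤ (m:ℝ) - 1)]
  have h1t0 : (0:ℝ) ≤ 1 - μ * ν := by linarith
  -- gradient of J
  have hJd : ∀ z, HasGradientAt J (gradJ z) z := by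
    intro z
    rw [hasGradientAt_iff_hasFDerivAt]
    have hf : HasFDerivAt (fun x => (N:ℝ)⁻¹ * ∑ n, Q n x)
        ((N:ℝ)⁻¹ • ∑ n, (InnerProductSpace.toDual ℝ E) (gradQ n z)) z := by
      apply HasFDerivAt.const_mul
      exact HasFDerivAt.fun_sum (fun n _ => (hQ n z).hasFDerivAt)
    have hfun : J = fun x => (N:ℝ)⁻¹ * ∑ n, Q n x := funext hJ
    rw [hfun, hgradJ z, map_smul, map_sum]
    exact hf
  have hJo : gradJ wo = 0 := by
    have hloc : IsLocalMin J wo := Filter.Eventually.of_forall (fun y => hmin (Set.mem_univ y))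
    have h0 := hloc.hasFDerivAt_eq_zero (hJd wo).hasFDerivAt
    have h1 := congrArg (InnerProductSpace.toDual ℝ E).symm h0
    simpa using h1
  have hmono := alphaSVRG_strong_grad_mono hJd hsc
  have key := alphaSVRG_perstep hN gradQ gradJ δn δ ν σ μ α wo hgradJ hLipn hδ hσ hmono hJo
    hμ0.le hα0 hα1 h3
  -- probabilistic bookkeeping
  set T := k * m with hT
  have hNT : (0:ℝ) < (N:ℝ)^T := by positivity
  set ex : (Fin T → Fin N) → (ℕ → Fin N) :=
    fun ωf j => if h : j < T then ωf ⟨j, h⟩ else ⟨0, hN⟩ with hex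
  set S : ℕ → ℝ := fun i => ∑ ωf : Fin T → Fin N, ‖wo - w i (ex ωf)‖ ^ 2 with hS
  set GG : ℕ → ℝ := fun i => ((N:ℝ)^T)⁻¹ * S i with hGG
  have hSnn : ∀ i, 0 ≤ S i := by
    intro i
    simp only [hS]
    exact Finset.sum_nonneg fun _ _ => sq_nonneg _
  have hGnn : ∀ i, 0 ≤ GG i := by
    intro i
    simp only [hGG]
    exact mul_nonneg (by positivity) (hSnn i)
  have hdep : ∀ i (ω ω' : ℕ → Fin N), (∀ j, j < i → ω j = ω' j) → w i ω = w i ω' := by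
    intro i
    induction i using Nat.strong_induction_on with
    | _ i IH =>
      match i with
      | 0 => exact fun ω ω' _ => by rw [hw0, hw0]
      | (i+1) =>
        intro ω ω' hag
        have h1 : w i ω = w i ω' :=
          IH i (Nat.lt_succ_self i) ω ω' fun j hj => hag j (Nat.lt_succ_of_lt hj)
        have hsl : m * (i / m) ≤ i := by
          calc m * (i / m) = i / m * m := Nat.mul_comm _ _
          _ ≤ i := Nat.div_mul_le_self i m
        have h2 : w (m * (i / m)) ω = w (m * (i / m)) ω' :=
          IH _ (Nat.lt_succ_of_le hsl) ω ω'
            fun j hj => hag j (Nat.lt_succ_of_lt (lt_of_lt_of_le hj hsl))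
        rw [hupd, hupd, h1, h2, hag i (Nat.lt_succ_self i)]
  -- one expectation step
  have hstep : ∀ i, i < T → S (i+1) ≤ (1 - μ*ν) * S i
      + 3*μ^2*α^2*δ^2 * S (m * (i/m)) + 3*μ^2*(1-α)^2*σ^2 * (N:ℝ)^T := by
    intro i hiT
    have hsnapi : m * (i / m) ≤ i := by
      calc m * (i / m) = i / m * m := Nat.mul_comm _ _
      _ ≤ i := Nat.div_mul_le_self i m
    have hqsum : ∀ F : (Fin T → Fin N) → ℝ,
        ∑ ωf, F ωf = ∑ p : Fin N × ({ j : Fin T // j ≠ (⟨i, hiT⟩ : Fin T) } → Fin N),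
          F ((Equiv.piSplitAt (⟨i, hiT⟩ : Fin T) (fun _ => Fin N)).symm p) :=
      fun F => (Equiv.sum_comp (Equiv.piSplitAt (⟨i, hiT⟩ : Fin T) fun _ => Fin N).symm F).symm
    have hagree : ∀ (n n' : Fin N) (ρ : { j : Fin T // j ≠ (⟨i, hiT⟩ : Fin T) } → Fin N)
        (i' : ℕ), i' ≤ i →
        w i' (ex ((Equiv.piSplitAt (⟨i, hiT⟩ : Fin T) fun _ => Fin N).symm (n, ρ)))
          = w i' (ex ((Equiv.piSplitAt (⟨i, hiT⟩ : Fin T) fun _ => Fin N).symm (n', ρ))) := by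
      intro n n' ρ i' hi'
      apply hdep
      intro j hj
      have hjne : j ≠ i := by omega
      simp only [hex]
      by_cases hjT : j < T
      · rw [dif_pos hjT, dif_pos hjT]
        have hne : (⟨j, hjT⟩ : Fin T) ≠ (⟨i, hiT⟩ : Fin T) := by
          simp only [ne_eq, Fin.mk.injEq]; exact hjne
        rw [Equiv.piSplitAt_symm_apply, Equiv.piSplitAt_symm_apply, dif_neg hne, dif_neg hne]
      · rw [dif_neg hjT, dif_neg hjT]
    have hat : ∀ (n : Fin N) (ρ : { j : Fin T // j ≠ (⟨i, hiT⟩ : Fin T) } → Fin N),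
        ex ((Equiv.piSplitAt (⟨i, hiT⟩ : Fin T) fun _ => Fin N).symm (n, ρ)) i = n := by
      intro n ρ
      simp only [hex]
      rw [dif_pos hiT, Equiv.piSplitAt_symm_apply, dif_pos rfl]
    set n0 : Fin N := ⟨0, hN⟩ with hn0
    have hmain : S (i+1)
        = ∑ ρ : { j : Fin T // j ≠ (⟨i, hiT⟩ : Fin T) } → Fin N, ∑ n : Fin N,
            ‖wo - w (i+1) (ex ((Equiv.piSplitAt (⟨i, hiT⟩ : Fin T) fun _ => Fin N).symm (n, ρ)))‖ ^ 2 := by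
      simp only [hS]
      rw [hqsum fun ωf => ‖wo - w (i+1) (ex ωf)‖ ^ 2, Fintype.sum_prod_type]
      exact Finset.sum_comm
    have hgroup : ∀ i', i' ≤ i → S i'
        = ∑ ρ : { j : Fin T // j ≠ (⟨i, hiT⟩ : Fin T) } → Fin N,
            (N:ℝ) * ‖wo - w i' (ex ((Equiv.piSplitAt (⟨i, hiT⟩ : Fin T) fun _ => Fin N).symm (n0, ρ)))‖ ^ 2 := by
      intro i' hi'
      simp only [hS]
      rw [hqsum fun ωf => ‖wo - w i' (ex ωf)‖ ^ 2, Fintype.sum_prod_type, Finset.sum_comm]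
      refine Finset.sum_congr rfl fun ρ _ => ?_
      rw [Finset.sum_congr rfl fun n _ => by rw [hagree n n0 ρ i' hi']]
      rw [Finset.sum_const, Finset.card_univ, Fintype.card_fin, nsmul_eq_mul]
    have hcnt : ∑ ρ : { j : Fin T // j ≠ (⟨i, hiT⟩ : Fin T) } → Fin N, (N:ℝ) = (N:ℝ)^T := by
      have h2 : ∑ p : Fin N × ({ j : Fin T // j ≠ (⟨i, hiT⟩ : Fin T) } → Fin N), (1:ℝ)
          = (N:ℝ)^T := by
        rw [← hqsum fun _ => (1:ℝ)]
        rw [Finset.sum_const, Finset.card_univ, nsmul_eq_mul, mul_one, Fintype.card_fun,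
          Fintype.card_fin, Fintype.card_fin]
        push_cast
        ring
      rw [← h2, Fintype.sum_prod_type, Finset.sum_comm]
      refine Finset.sum_congr rfl fun ρ _ => ?_
      rw [Finset.sum_const, Finset.card_univ, Fintype.card_fin, nsmul_eq_mul, mul_one]
    have hupd2 : ∀ (n : Fin N) (ρ : { j : Fin T // j ≠ (⟨i, hiT⟩ : Fin T) } → Fin N),
        w (i+1) (ex ((Equiv.piSplitAt (⟨i, hiT⟩ : Fin T) fun _ => Fin N).symm (n, ρ)))
        = w i (ex ((Equiv.piSplitAt (⟨i, hiT⟩ : Fin T) fun _ => Fin N).symm (n0, ρ)))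
          - μ • (gradQ n (w i (ex ((Equiv.piSplitAt (⟨i, hiT⟩ : Fin T) fun _ => Fin N).symm (n0, ρ))))
            - α • gradQ n (w (m*(i/m)) (ex ((Equiv.piSplitAt (⟨i, hiT⟩ : Fin T) fun _ => Fin N).symm (n0, ρ))))
            + α • gradJ (w (m*(i/m)) (ex ((Equiv.piSplitAt (⟨i, hiT⟩ : Fin T) fun _ => Fin N).symm (n0, ρ))))) := by
      intro n ρ
      rw [hupd, hat n ρ, hagree n n0 ρ i le_rfl, hagree n n0 ρ (m*(i/m)) hsnapi]
    have hinner : ∀ ρ : { j : Fin T // j ≠ (⟨i, hiT⟩ : Fin T) } → Fin N,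
        ∑ n : Fin N, ‖wo - w (i+1) (ex ((Equiv.piSplitAt (⟨i, hiT⟩ : Fin T) fun _ => Fin N).symm (n, ρ)))‖ ^ 2
        ≤ (N:ℝ) * ((1 - μ*ν) * ‖wo - w i (ex ((Equiv.piSplitAt (⟨i, hiT⟩ : Fin T) fun _ => Fin N).symm (n0, ρ)))‖ ^ 2
          + 3*μ^2*α^2*δ^2 * ‖wo - w (m*(i/m)) (ex ((Equiv.piSplitAt (⟨i, hiT⟩ : Fin T) fun _ => Fin N).symm (n0, ρ)))‖ ^ 2
          + 3*μ^2*(1-α)^2*σ^2) := by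
      intro ρ
      have hk := key (w i (ex ((Equiv.piSplitAt (⟨i, hiT⟩ : Fin T) fun _ => Fin N).symm (n0, ρ))))
        (w (m*(i/m)) (ex ((Equiv.piSplitAt (⟨i, hiT⟩ : Fin T) fun _ => Fin N).symm (n0, ρ))))
      rw [Finset.sum_congr rfl fun n _ => by rw [hupd2 n ρ]]
      have h9 := mul_le_mul_of_nonneg_left hk hNR.le
      rw [← mul_assoc, mul_inv_cancel₀ (ne_of_gt hNR), one_mul] at h9
      exact h9
    calc S (i+1) = ∑ ρ : { j : Fin T // j ≠ (⟨i, hiT⟩ : Fin T) } → Fin N, ∑ n : Fin N,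
            ‖wo - w (i+1) (ex ((Equiv.piSplitAt (⟨i, hiT⟩ : Fin T) fun _ => Fin N).symm (n, ρ)))‖ ^ 2 := hmain
      _ ≤ ∑ ρ : { j : Fin T // j ≠ (⟨i, hiT⟩ : Fin T) } → Fin N,
            (N:ℝ) * ((1 - μ*ν) * ‖wo - w i (ex ((Equiv.piSplitAt (⟨i, hiT⟩ : Fin T) fun _ => Fin N).symm (n0, ρ)))‖ ^ 2
            + 3*μ^2*α^2*δ^2 * ‖wo - w (m*(i/m)) (ex ((Equiv.piSplitAt (⟨i, hiT⟩ : Fin T) fun _ => Fin N).symm (n0, ρ)))‖ ^ 2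
            + 3*μ^2*(1-α)^2*σ^2) := Finset.sum_le_sum fun ρ _ => hinner ρ
      _ = (1 - μ*ν) * (∑ ρ : { j : Fin T // j ≠ (⟨i, hiT⟩ : Fin T) } → Fin N,
            (N:ℝ) * ‖wo - w i (ex ((Equiv.piSplitAt (⟨i, hiT⟩ : Fin T) fun _ => Fin N).symm (n0, ρ)))‖ ^ 2)
          + 3*μ^2*α^2*δ^2 * (∑ ρ : { j : Fin T // j ≠ (⟨i, hiT⟩ : Fin T) } → Fin N,
            (N:ℝ) * ‖wo - w (m*(i/m)) (ex ((Equiv.piSplitAt (⟨i, hiT⟩ : Fin T) fun _ => Fin N).symm (n0, ρ)))‖ ^ 2)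
          + 3*μ^2*(1-α)^2*σ^2 * (∑ ρ : { j : Fin T // j ≠ (⟨i, hiT⟩ : Fin T) } → Fin N, (N:ℝ)) := by
          rw [Finset.mul_sum, Finset.mul_sum, Finset.mul_sum, ← Finset.sum_add_distrib,
            ← Finset.sum_add_distrib]
          exact Finset.sum_congr rfl fun ρ _ => by ring
      _ = (1 - μ*ν) * S i + 3*μ^2*α^2*δ^2 * S (m * (i/m)) + 3*μ^2*(1-α)^2*σ^2 * (N:ℝ)^T := by
          rw [← hgroup i le_rfl, ← hgroup (m*(i/m)) hsnapi, hcnt]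
  have hstepG : ∀ i, i < T → GG (i+1) ≤ (1 - μ*ν) * GG i
      + 3*μ^2*α^2*δ^2 * GG (m * (i/m)) + 3*μ^2*(1-α)^2*σ^2 := by
    intro i hiT
    have h9 := mul_le_mul_of_nonneg_left (hstep i hiT) (by positivity : (0:ℝ) ≤ ((N:ℝ)^T)⁻¹)
    have h10 : ((N:ℝ)^T)⁻¹ * ((1 - μ*ν) * S i + 3*μ^2*α^2*δ^2 * S (m * (i/m))
        + 3*μ^2*(1-α)^2*σ^2 * (N:ℝ)^T)
        = (1 - μ*ν) * (((N:ℝ)^T)⁻¹ * S i) + 3*μ^2*α^2*δ^2 * (((N:ℝ)^T)⁻¹ * S (m * (i/m)))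
          + 3*μ^2*(1-α)^2*σ^2 := by
      field_simp
    rw [h10] at h9
    simp only [hGG]
    exact h9
  -- initial value
  have hG0 : GG 0 = ‖wo - w0‖ ^ 2 := by
    simp only [hGG, hS]
    rw [Finset.sum_congr rfl fun ωf _ => by rw [hw0]]
    rw [Finset.sum_const, Finset.card_univ, nsmul_eq_mul, Fintype.card_fun, Fintype.card_fin,
      Fintype.card_fin]
    push_cast
    rw [← mul_assoc, inv_mul_cancel₀ (ne_of_gt hNT), one_mul]
  -- inner (within-epoch) induction
  have hinner_ind : ∀ k', k' < k → ∀ j, j ≤ m →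
      GG (k'*m + j) ≤ (1 - μ*ν)^j * GG (k'*m)
        + (3*μ^2*α^2*δ^2 * GG (k'*m) + 3*μ^2*(1-α)^2*σ^2) * ∑ l ∈ Finset.range j, (1 - μ*ν)^l := by
    intro k' hk' j
    induction j with
    | zero => intro _; simp
    | succ j IH =>
      intro hj1
      have hjm : j < m := hj1
      have hIH := IH (le_of_lt hjm)
      have hiT : k'*m + j < T := by
        have h1 : k'*m + j < (k'+1)*m := by
          rw [add_one_mul]; omega
        have h2 : (k'+1)*m ≤ k*m := Nat.mul_le_mul_right m hk'
        rw [hT]; omega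
      have hdiv : (k'*m + j) / m = k' := by
        rw [Nat.add_comm, Nat.add_mul_div_right _ _ hm, Nat.div_eq_of_lt hjm, Nat.zero_add]
      have hsnap : m * ((k'*m + j)/m) = k'*m := by rw [hdiv, Nat.mul_comm]
      have h := hstepG (k'*m + j) hiT
      rw [hsnap] at h
      have hGeom : ∑ l ∈ Finset.range (j+1), (1 - μ*ν)^l
          = (1 - μ*ν) * ∑ l ∈ Finset.range j, (1 - μ*ν)^l + 1 := geom_sum_succ
      have hmul := mul_le_mul_of_nonneg_left hIH h1t0
      calc GG (k'*m + (j+1)) = GG ((k'*m + j) + 1) := by rw [Nat.add_succ]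
        _ ≤ (1 - μ*ν) * GG (k'*m + j) + 3*μ^2*α^2*δ^2 * GG (k'*m) + 3*μ^2*(1-α)^2*σ^2 := h
        _ ≤ (1 - μ*ν) * ((1 - μ*ν)^j * GG (k'*m)
              + (3*μ^2*α^2*δ^2 * GG (k'*m) + 3*μ^2*(1-α)^2*σ^2) * ∑ l ∈ Finset.range j, (1 - μ*ν)^l)
            + 3*μ^2*α^2*δ^2 * GG (k'*m) + 3*μ^2*(1-α)^2*σ^2 := by linarith
        _ = (1 - μ*ν)^(j+1) * GG (k'*m)
            + (3*μ^2*α^2*δ^2 * GG (k'*m) + 3*μ^2*(1-α)^2*σ^2)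
              * ∑ l ∈ Finset.range (j+1), (1 - μ*ν)^l := by
            rw [hGeom]; ring
  -- numeric facts for the outer induction
  have hu0 : (0:ℝ) ≤ 1 - (1 - μ*ν)^m := by
    have := pow_le_one₀ h1t0 (by linarith : 1 - μ*ν ≤ 1) (n := m)
    linarith
  have hu1 : 1 - (1 - μ*ν)^m ≤ 1 := by
    have := pow_nonneg h1t0 m
    linarith
  have hSm : ∑ l ∈ Finset.range m, (1 - μ*ν)^l = (1 - (1 - μ*ν)^m) / (μ*ν) := by
    rw [geom_sum_eq (by intro hcon; nlinarith [hcon] : (1 - μ*ν) ≠ 1)]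
    rw [div_eq_div_iff (by intro hcon; nlinarith [hcon] : (1 - μ*ν) - 1 ≠ 0) (ne_of_gt ht0)]
    ring
  have hD : (0:ℝ) < ν - 8*μ*δ^2*α := by linarith
  have hμne : μ ≠ 0 := ne_of_gt hμ0
  have hνne : ν ≠ 0 := ne_of_gt hν
  have hDne : ν - 8*μ*δ^2*α ≠ 0 := ne_of_gt hD
  have hTc : (0:ℝ) ≤ 3*μ*σ^2*(1-α)/(ν - 8*μ*δ^2*α) := by
    apply div_nonneg _ hD.le
    exact mul_nonneg (by positivity) (by linarith : (0:ℝ) ≤ 1 - α)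
  have hρ0 : (0:ℝ) ≤ (1 - μ*ν)^m + 8*μ*δ^2*α/ν := by
    have h1 := pow_nonneg h1t0 m
    have h2 : (0:ℝ) ≤ 8*μ*δ^2*α/ν := by positivity
    linarith
  -- outer induction over epochs
  have houter : ∀ k', k' ≤ k →
      GG (k'*m) ≤ ((1 - μ*ν)^m + 8*μ*δ^2*α/ν)^k' * ‖wo - w0‖^2
        + 3*μ*σ^2*(1-α)/(ν - 8*μ*δ^2*α) := by
    intro k'
    induction k' with
    | zero =>
      intro _
      simp only [Nat.zero_mul, pow_zero, one_mul]
      rw [hG0]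
      linarith
    | succ k' IH =>
      intro hk1
      have hk'lt : k' < k := hk1
      have hIH := IH (le_of_lt hk'lt)
      have hj := hinner_ind k' hk'lt m le_rfl
      rw [hSm] at hj
      set u : ℝ := 1 - (1 - μ*ν)^m with hu
      have hP0 : 0 ≤ GG (k'*m) := hGnn _
      have hB0 : (0:ℝ) ≤ ‖wo - w0‖^2 := sq_nonneg _
      have hudiv : (0:ℝ) ≤ u / (μ*ν) := div_nonneg hu0 ht0.le
      have hρ'0 : (0:ℝ) ≤ (1 - μ*ν)^m + 3*μ^2*α^2*δ^2 * (u/(μ*ν)) :=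
        add_nonneg (pow_nonneg h1t0 m) (mul_nonneg (by positivity) hudiv)
      have hρ' : (1 - μ*ν)^m + 3*μ^2*α^2*δ^2 * (u/(μ*ν)) ≤ (1 - μ*ν)^m + 8*μ*δ^2*α/ν := by
        have hK : (0:ℝ) ≤ μ^2*δ^2*ν := by positivity
        have h2 : 3*(α*(α*u)) ≤ 8*α := by
          nlinarith [mul_nonneg (sq_nonneg α) (by linarith : (0:ℝ) ≤ 1 - u),
            mul_nonneg hα0 (by linarith : (0:ℝ) ≤ 1 - α)]
        have h1 : 3*μ^2*α^2*δ^2 * (u/(μ*ν)) ≤ 8*μ*δ^2*α/ν := by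
          rw [mul_div_assoc']
          rw [div_le_div_iff₀ ht0 hν]
          nlinarith [mul_le_mul_of_nonneg_left h2 hK]
        linarith
      have hbr2 : (1-α)*(ν - 8*μ*δ^2*α) ≤ ν - 3*μ*α^2*δ^2 := by
        nlinarith [mul_nonneg hα0 (by linarith : (0:ℝ) ≤ ν - 3*(μ*δ^2)),
          mul_nonneg (mul_nonneg hμδ hα0) (by linarith : (0:ℝ) ≤ 1-α)]
      have hnum : (0:ℝ) ≤ 3*μ*σ^2*(1-α)*u * ((ν - 3*μ*α^2*δ^2) - (1-α)*(ν - 8*μ*δ^2*α)) := by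
        apply mul_nonneg (mul_nonneg _ hu0)
        · linarith [hbr2]
        · exact mul_nonneg (by positivity) (by linarith : (0:ℝ) ≤ 1 - α)
      have hTstep : ((1 - μ*ν)^m + 3*μ^2*α^2*δ^2 * (u/(μ*ν))) * (3*μ*σ^2*(1-α)/(ν - 8*μ*δ^2*α))
          + 3*μ^2*(1-α)^2*σ^2 * (u/(μ*ν)) ≤ 3*μ*σ^2*(1-α)/(ν - 8*μ*δ^2*α) := by
        rw [← sub_nonneg]
        have h1mu : (1 - μ*ν)^m = 1 - u := by rw [hu]; ring
        have hdiff : 3*μ*σ^2*(1-α)/(ν - 8*μ*δ^2*α)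
            - (((1 - μ*ν)^m + 3*μ^2*α^2*δ^2 * (u/(μ*ν))) * (3*μ*σ^2*(1-α)/(ν - 8*μ*δ^2*α))
              + 3*μ^2*(1-α)^2*σ^2 * (u/(μ*ν)))
            = 3*μ*σ^2*(1-α)*u * ((ν - 3*μ*α^2*δ^2) - (1-α)*(ν - 8*μ*δ^2*α))
              / (ν * (ν - 8*μ*δ^2*α)) := by
          rw [h1mu]
          generalize hDD : ν - 8*μ*δ^2*α = D at hDne ⊢
          field_simp
          ring
        rw [hdiff]
        exact div_nonneg hnum (by positivity)
      have e1 := mul_le_mul_of_nonneg_right hρ'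
        (mul_nonneg (pow_nonneg hρ0 k') hB0)
      calc GG ((k'+1)*m) = GG (k'*m + m) := by rw [Nat.succ_mul]
        _ ≤ (1 - μ*ν)^m * GG (k'*m)
            + (3*μ^2*α^2*δ^2 * GG (k'*m) + 3*μ^2*(1-α)^2*σ^2) * (u/(μ*ν)) := hj
        _ = ((1 - μ*ν)^m + 3*μ^2*α^2*δ^2 * (u/(μ*ν))) * GG (k'*m)
            + 3*μ^2*(1-α)^2*σ^2 * (u/(μ*ν)) := by ring
        _ ≤ ((1 - μ*ν)^m + 3*μ^2*α^2*δ^2 * (u/(μ*ν)))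
              * (((1 - μ*ν)^m + 8*μ*δ^2*α/ν)^k' * ‖wo - w0‖^2
                + 3*μ*σ^2*(1-α)/(ν - 8*μ*δ^2*α))
            + 3*μ^2*(1-α)^2*σ^2 * (u/(μ*ν)) := by
            exact add_le_add_left (mul_le_mul_of_nonneg_left hIH hρ'0) _
        _ = ((1 - μ*ν)^m + 3*μ^2*α^2*δ^2 * (u/(μ*ν)))
              * (((1 - μ*ν)^m + 8*μ*δ^2*α/ν)^k' * ‖wo - w0‖^2)
            + (((1 - μ*ν)^m + 3*μ^2*α^2*δ^2 * (u/(μ*ν))) * (3*μ*σ^2*(1-α)/(ν - 8*μ*δ^2*α))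
              + 3*μ^2*(1-α)^2*σ^2 * (u/(μ*ν))) := by ring
        _ ≤ ((1 - μ*ν)^m + 8*μ*δ^2*α/ν)
              * (((1 - μ*ν)^m + 8*μ*δ^2*α/ν)^k' * ‖wo - w0‖^2)
            + 3*μ*σ^2*(1-α)/(ν - 8*μ*δ^2*α) := by
            linarith [hTstep, e1]
        _ = ((1 - μ*ν)^m + 8*μ*δ^2*α/ν)^(k'+1) * ‖wo - w0‖^2
            + 3*μ*σ^2*(1-α)/(ν - 8*μ*δ^2*α) := by rw [pow_succ]; ring
  have hfin := houter k le_rfl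
  rw [← hT] at hfin
  simpa only [hGG, hS, hex] using hfin
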